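/- arXiv:1207.6045 — 3 statements merged into one kernel-verified Lean document; each statement's English description precedes it below -/
import Mathlib

section
/- Let X be a real-valued random variable (not necessarily continuous) with CDF F, define the modified distribution function F(x, λ) = P(X < x) + λ·P(X = x), and let V be a random variable uniformly distributed on [0,1] and independent of X. Then the random variable Y = F(X, V) is uniformly distributed on [0,1]. -/
open MeasureTheory ProbabilityTheory
open scoped ENNReal

/-- The uniform probability measure on the interval `[0,1]`. -/
noncomputable def uniform01 : Measure ℝ := volume.restrict (Set.Icc 0 1)

lemma uniform01_apply (s : Set ℝ) : uniform01 s = volume (s ∩ Set.Icc 0 1) :=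
  Measure.restrict_apply' measurableSet_Icc

instance : IsProbabilityMeasure uniform01 := by
  constructor
  rw [uniform01_apply]
  simp [Real.volume_Icc]

lemma unif_full {c d u : ℝ} (hd : 0 ≤ d) (h : c + d < u) :
    uniform01 {lam | c + lam * d < u} = 1 := by
  rw [uniform01_apply]
  have hsub : Set.Icc (0:ℝ) 1 ⊆ {lam | c + lam * d < u} := by
    intro lam hlam
    have : lam * d ≤ d := mul_le_of_le_one_left hd hlam.2
    exact lt_of_le_of_lt (by linarith) h
  rw [Set.inter_eq_right.mpr hsub]
  simp [Real.volume_Icc]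

lemma unif_empty {c d u : ℝ} (hd : 0 ≤ d) (h : u ≤ c) :
    uniform01 {lam | c + lam * d < u} = 0 := by
  rw [uniform01_apply]
  have : {lam : ℝ | c + lam * d < u} ∩ Set.Icc 0 1 = ∅ := by
    ext lam
    simp only [Set.mem_inter_iff, Set.mem_setOf_eq, Set.mem_Icc, Set.mem_empty_iff_false,
      iff_false]
    rintro ⟨h1, h2, _⟩
    nlinarith
  rw [this]
  simp

lemma unif_Ico {c d u : ℝ} (hd : 0 < d) (h1 : c ≤ u) (h2 : u ≤ c + d) :
    uniform01 {lam | c + lam * d < u} = ENNReal.ofReal ((u - c) / d) := by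
  rw [uniform01_apply]
  have ht1 : (u - c) / d ≤ 1 := by
    rw [div_le_one hd]; linarith
  have hset : {lam : ℝ | c + lam * d < u} ∩ Set.Icc 0 1 = Set.Ico 0 ((u - c) / d) := by
    ext lam
    simp only [Set.mem_inter_iff, Set.mem_setOf_eq, Set.mem_Icc, Set.mem_Ico]
    constructor
    · rintro ⟨h3, h4, _⟩
      refine ⟨h4, ?_⟩
      rw [lt_div_iff₀ hd]
      linarith
    · rintro ⟨h3, h4⟩
      refine ⟨?_, h3, le_trans (le_of_lt h4) ht1⟩
      rw [lt_div_iff₀ hd] at h4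
      nlinarith
  rw [hset, Real.volume_Ico, sub_zero]

lemma uniform01_Iio_of_le {u : ℝ} (hu : u ≤ 1) : uniform01 (Set.Iio u) = ENNReal.ofReal u := by
  rw [uniform01_apply]
  rcases le_or_gt u 0 with h | h
  · have : Set.Iio u ∩ Set.Icc (0:ℝ) 1 = ∅ := by
      ext lam
      simp only [Set.mem_inter_iff, Set.mem_Iio, Set.mem_Icc, Set.mem_empty_iff_false, iff_false]
      rintro ⟨h1, h2, _⟩; linarith
    rw [this]
    simp [ENNReal.ofReal_of_nonpos h]
  · have : Set.Iio u ∩ Set.Icc (0:ℝ) 1 = Set.Ico 0 u := by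
      ext lam
      simp only [Set.mem_inter_iff, Set.mem_Iio, Set.mem_Icc, Set.mem_Ico]
      constructor
      · rintro ⟨h1, h2, _⟩; exact ⟨h2, h1⟩
      · rintro ⟨h1, h2⟩; exact ⟨h2, h1, le_trans (le_of_lt h2) hu⟩
    rw [this, Real.volume_Ico, sub_zero]

lemma uniform01_Iio_of_ge {u : ℝ} (hu : 1 ≤ u) : uniform01 (Set.Iio u) = 1 := by
  refine le_antisymm ?_ ?_
  · calc uniform01 (Set.Iio u) ≤ uniform01 Set.univ := measure_mono (Set.subset_univ _)
      _ = 1 := measure_univ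
  rw [uniform01_apply]
  have hsub : Set.Ico (0:ℝ) 1 ⊆ Set.Iio u ∩ Set.Icc 0 1 := by
    rintro lam ⟨h1, h2⟩
    exact ⟨lt_of_lt_of_le h2 hu, h1, le_of_lt h2⟩
  calc (1:ℝ≥0∞) = volume (Set.Ico (0:ℝ) 1) := by simp [Real.volume_Ico]
    _ ≤ volume (Set.Iio u ∩ Set.Icc 0 1) := measure_mono hsub

/-- extensionality via `Iio` for probability measures on ℝ. -/
lemma ext_Iio (μ ν : Measure ℝ) [IsProbabilityMeasure μ] [IsProbabilityMeasure ν]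
    (h : ∀ u : ℝ, μ (Set.Iio u) = ν (Set.Iio u)) : μ = ν := by
  refine ext_of_generate_finite (Set.range Set.Iio) ?_ isPiSystem_Iio ?_ (by simp)
  · rw [BorelSpace.measurable_eq (α := ℝ), borel_eq_generateFrom_Iio]
  · rintro t ⟨u, rfl⟩; exact h u

/-- **Generalized Distributional Transform.**
Let `X` be a real-valued random variable (not necessarily continuous), define the modified
distribution function `F(x, λ) = P(X < x) + λ·P(X = x)`, and let `V` be uniform on `[0,1]`
and independent of `X`. Then `Y = F(X, V)` is uniformly distributed on `[0,1]`. -/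
theorem gdt_uniform {Ω : Type*} [MeasurableSpace Ω] (P : Measure Ω) [IsProbabilityMeasure P]
    (X V : Ω → ℝ) (hX : Measurable X) (hV : Measurable V)
    (hVunif : P.map V = uniform01)
    (hindep : IndepFun X V P)
    (F : ℝ → ℝ → ℝ)
    (hF : ∀ x lam, F x lam = (P.map X (Set.Iio x)).toReal + lam * (P.map X {x}).toReal) :
    P.map (fun ω => F (X ω) (V ω)) = uniform01 := by
  classical
  set μ : Measure ℝ := P.map X with hμdef
  have hμprob : IsProbabilityMeasure μ := Measure.isProbabilityMeasure_map hX.aemeasurable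
  have hfin : ∀ s : Set ℝ, μ s ≠ ⊤ := fun s => measure_ne_top μ s
  set a : ℝ → ℝ := fun x => (μ (Set.Iio x)).toReal with ha
  set b : ℝ → ℝ := fun x => (μ (Set.Iic x)).toReal with hb
  set m : ℝ → ℝ := fun x => (μ {x}).toReal with hm
  have ha_mono : Monotone a := fun x y hxy =>
    ENNReal.toReal_mono (hfin _) (measure_mono (Set.Iio_subset_Iio hxy))
  have hb_mono : Monotone b := fun x y hxy =>
    ENNReal.toReal_mono (hfin _) (measure_mono (Set.Iic_subset_Iic.mpr hxy))
  have hm_eq : ∀ x, m x = b x - a x := by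
    intro x
    have hx : ({x} : Set ℝ) = Set.Iic x \ Set.Iio x := by
      ext y
      simp only [Set.mem_singleton_iff, Set.mem_diff, Set.mem_Iic, Set.mem_Iio, not_lt]
      constructor
      · rintro rfl; exact ⟨le_refl _, le_refl _⟩
      · rintro ⟨h1, h2⟩; exact le_antisymm h1 h2
    show (μ ({x} : Set ℝ)).toReal = b x - a x
    rw [hx, measure_diff Set.Iio_subset_Iic_self measurableSet_Iio.nullMeasurableSet (hfin _),
      ENNReal.toReal_sub_of_le (measure_mono Set.Iio_subset_Iic_self) (hfin _)]
  have ha_nonneg : ∀ x, 0 ≤ a x := fun x => ENNReal.toReal_nonneg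
  have hm_nonneg : ∀ x, 0 ≤ m x := fun x => ENNReal.toReal_nonneg
  have ham : ∀ x, a x + m x = b x := by intro x; rw [hm_eq]; ring
  have hm_meas : Measurable m := by
    have : m = fun x => b x - a x := funext hm_eq
    rw [this]
    exact hb_mono.measurable.sub ha_mono.measurable
  set f : ℝ × ℝ → ℝ := fun p => a p.1 + p.2 * m p.1 with hf
  have hfmeas : Measurable f :=
    (ha_mono.measurable.comp measurable_fst).add
      (measurable_snd.mul (hm_meas.comp measurable_fst))
  have hrw : (fun ω => F (X ω) (V ω)) = f ∘ (fun ω => (X ω, V ω)) := by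
    funext ω
    simp only [Function.comp_apply, hf, hF, ha, hm, hμdef]
  have hpair : P.map (fun ω => (X ω, V ω)) = μ.prod uniform01 := by
    rw [← hVunif]
    exact (indepFun_iff_map_prod_eq_prod_map_map hX.aemeasurable hV.aemeasurable).mp hindep
  have hmap : P.map (fun ω => F (X ω) (V ω)) = (μ.prod uniform01).map f := by
    rw [hrw, ← Measure.map_map hfmeas (hX.prodMk hV), hpair]
  rw [hmap]
  have : IsProbabilityMeasure ((μ.prod uniform01).map f) :=
    Measure.isProbabilityMeasure_map hfmeas.aemeasurable
  refine ext_Iio _ _ fun u => ?_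
  -- compute LHS as an integral
  have hLHS : (μ.prod uniform01).map f (Set.Iio u)
      = ∫⁻ x, uniform01 {lam | a x + lam * m x < u} ∂μ := by
    rw [Measure.map_apply hfmeas measurableSet_Iio,
      Measure.prod_apply (hfmeas measurableSet_Iio)]
    rfl
  rw [hLHS]
  -- b is dominated by 1
  have hb_le_one : ∀ x, b x ≤ 1 := by
    intro x
    rw [hb]
    have := prob_le_one (μ := μ) (s := Set.Iic x)
    calc (μ (Set.Iic x)).toReal ≤ (1 : ℝ≥0∞).toReal := ENNReal.toReal_mono (by simp) this
      _ = 1 := by simp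
  rcases le_or_gt u 0 with hu0 | hu0
  · -- u ≤ 0 : both sides 0
    have h0 : ∀ x : ℝ, uniform01 {lam | a x + lam * m x < u} = 0 := fun x =>
      unif_empty (hm_nonneg x) (le_trans hu0 (ha_nonneg x))
    rw [lintegral_congr h0, lintegral_zero]
    rcases le_or_gt u 1 with h | h
    · rw [uniform01_Iio_of_le h, ENNReal.ofReal_of_nonpos hu0]
    · linarith
  · set A : Set ℝ := {x | u ≤ b x} with hA
    by_cases hAne : A.Nonempty
    · -- main case
      have hbdd : BddBelow A := by
        by_contra hnb
        -- get some z with μ (Iic z) < ofReal u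
        have hinter : ⋂ n : ℕ, Set.Iic (-(n:ℝ)) = ∅ := by
          ext x
          simp only [Set.mem_iInter, Set.mem_Iic, Set.mem_empty_iff_false, iff_false, not_forall,
            not_le]
          obtain ⟨n, hn⟩ := exists_nat_gt (-x)
          exact ⟨n, by linarith⟩
        have hanti : Antitone (fun n : ℕ => Set.Iic (-(n:ℝ))) := fun i j hij =>
          Set.Iic_subset_Iic.mpr (by exact_mod_cast neg_le_neg (by exact_mod_cast hij))
        have h0 : μ (⋂ n : ℕ, Set.Iic (-(n:ℝ))) = ⨅ n : ℕ, μ (Set.Iic (-(n:ℝ))) :=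
          hanti.measure_iInter (fun n => measurableSet_Iic.nullMeasurableSet) ⟨0, hfin _⟩
        rw [hinter, measure_empty] at h0
        have : ∃ n : ℕ, μ (Set.Iic (-(n:ℝ))) < ENNReal.ofReal u := by
          by_contra hcon
          push_neg at hcon
          have := le_iInf hcon
          rw [← h0] at this
          exact absurd (lt_of_lt_of_le (ENNReal.ofReal_pos.mpr hu0) this) (lt_irrefl _)
        obtain ⟨n, hn⟩ := this
        refine hnb ⟨-(n:ℝ), fun x hx => ?_⟩
        by_contra hlt
        push_neg at hlt
        have h1 : μ (Set.Iic x) ≤ μ (Set.Iic (-(n:ℝ))) :=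
          measure_mono (Set.Iic_subset_Iic.mpr hlt.le)
        have h2 : ENNReal.ofReal u ≤ μ (Set.Iic x) := ENNReal.ofReal_le_of_le_toReal hx
        exact absurd (lt_of_le_of_lt (h2.trans h1) hn) (lt_irrefl _)
      set xs : ℝ := sInf A with hxs
      -- x* is in A
      have hxsA : ENNReal.ofReal u ≤ μ (Set.Iic xs) := by
        have hIic : Set.Iic xs = ⋂ n : ℕ, Set.Iic (xs + ((n:ℝ)+1)⁻¹) := by
          ext x
          simp only [Set.mem_Iic, Set.mem_iInter]
          constructor
          · intro h n
            have : (0:ℝ) < ((n:ℝ)+1)⁻¹ := by positivity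
            linarith
          · intro h
            by_contra hlt
            push_neg at hlt
            obtain ⟨n, hn⟩ := exists_nat_one_div_lt (sub_pos.mpr hlt)
            have := h n
            rw [one_div] at hn
            linarith
        have hanti : Antitone (fun n : ℕ => Set.Iic (xs + ((n:ℝ)+1)⁻¹)) := by
          intro i j hij
          refine Set.Iic_subset_Iic.mpr (add_le_add le_rfl ?_)
          exact inv_anti₀ (by positivity) (by exact_mod_cast add_le_add (Nat.cast_le.mpr hij) le_rfl)
        rw [hIic, hanti.measure_iInter (fun n => measurableSet_Iic.nullMeasurableSet) ⟨0, hfin _⟩]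
        refine le_iInf fun n => ?_
        have hlt : xs < xs + ((n:ℝ)+1)⁻¹ := by
          have : (0:ℝ) < ((n:ℝ)+1)⁻¹ := by positivity
          linarith
        obtain ⟨y, hyA, hy⟩ := (csInf_lt_iff hbdd hAne).mp hlt
        calc ENNReal.ofReal u ≤ μ (Set.Iic y) := ENNReal.ofReal_le_of_le_toReal hyA
          _ ≤ _ := measure_mono (Set.Iic_subset_Iic.mpr hy.le)
      have hu_le_bxs : u ≤ b xs := by
        have := ENNReal.toReal_mono (hfin _) hxsA
        rwa [ENNReal.toReal_ofReal hu0.le] at this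
      -- μ (Iio xs) ≤ ofReal u
      have hIio_le : μ (Set.Iio xs) ≤ ENNReal.ofReal u := by
        have hunion : Set.Iio xs = ⋃ n : ℕ, Set.Iic (xs - ((n:ℝ)+1)⁻¹) := by
          ext x
          simp only [Set.mem_Iio, Set.mem_iUnion, Set.mem_Iic]
          constructor
          · intro h
            obtain ⟨n, hn⟩ := exists_nat_one_div_lt (sub_pos.mpr h)
            rw [one_div] at hn
            exact ⟨n, by linarith⟩
          · rintro ⟨n, hn⟩
            have : (0:ℝ) < ((n:ℝ)+1)⁻¹ := by positivity
            linarith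
        have hmono : Monotone (fun n : ℕ => Set.Iic (xs - ((n:ℝ)+1)⁻¹)) := by
          intro i j hij
          refine Set.Iic_subset_Iic.mpr (sub_le_sub_left ?_ _)
          exact inv_anti₀ (by positivity) (by exact_mod_cast add_le_add (Nat.cast_le.mpr hij) le_rfl)
        rw [hunion, hmono.measure_iUnion]
        refine iSup_le fun n => ?_
        have hxlt : xs - ((n:ℝ)+1)⁻¹ < xs := by
          have : (0:ℝ) < ((n:ℝ)+1)⁻¹ := by positivity
          linarith
        have hnotA : xs - ((n:ℝ)+1)⁻¹ ∉ A := fun hmem => absurd (csInf_le hbdd hmem) (not_le.mpr hxlt)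
        have : b (xs - ((n:ℝ)+1)⁻¹) < u := not_le.mp hnotA
        exact (ENNReal.le_ofReal_iff_toReal_le (hfin _) hu0.le).mpr this.le
      have ha_le_u : a xs ≤ u := by
        have := ENNReal.toReal_mono ENNReal.ofReal_ne_top hIio_le
        rwa [ENNReal.toReal_ofReal hu0.le] at this
      -- split the integral
      have hsplit : μ = μ.restrict (Set.Iio xs) + (μ.restrict {xs} + μ.restrict (Set.Ioi xs)) := by
        have h1 : ({xs} : Set ℝ) ∪ Set.Ioi xs = Set.Ici xs := by
          ext y
          simp only [Set.mem_union, Set.mem_singleton_iff, Set.mem_Ioi, Set.mem_Ici]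
          constructor
          · rintro (rfl | h)
            · exact le_refl _
            · exact h.le
          · intro h
            exact (eq_or_lt_of_le h).imp Eq.symm id
        have h2 : Set.Iio xs ∪ ({xs} ∪ Set.Ioi xs) = Set.univ := by
          rw [h1, Set.Iio_union_Ici]
        have hd1 : Disjoint ({xs} : Set ℝ) (Set.Ioi xs) := by
          simp [Set.disjoint_left]
        have hd2 : Disjoint (Set.Iio xs) ({xs} ∪ Set.Ioi xs) := by
          rw [h1]
          exact Set.Iio_disjoint_Ici (le_refl _)
        conv_lhs => rw [← Measure.restrict_univ (μ := μ), ← h2]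
        rw [Measure.restrict_union hd2 (by rw [h1]; exact measurableSet_Ici),
          Measure.restrict_union hd1 measurableSet_Ioi]
      set g : ℝ → ℝ≥0∞ := fun x => uniform01 {lam | a x + lam * m x < u} with hg
      have hint : ∫⁻ x, g x ∂μ
          = ∫⁻ x, g x ∂(μ.restrict (Set.Iio xs)) + (∫⁻ x, g x ∂(μ.restrict {xs})
            + ∫⁻ x, g x ∂(μ.restrict (Set.Ioi xs))) := by
        conv_lhs => rw [hsplit]
        rw [lintegral_add_measure, lintegral_add_measure]
      rw [hint]
      -- on Iio xs the integrand is 1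
      have hpart1 : ∫⁻ x, g x ∂(μ.restrict (Set.Iio xs)) = μ (Set.Iio xs) := by
        have hcongr : ∀ᵐ x ∂(μ.restrict (Set.Iio xs)), g x = 1 := by
          refine (ae_restrict_iff' measurableSet_Iio).mpr (ae_of_all _ fun x hx => ?_)
          have hxnotA : x ∉ A := fun hmem => absurd (csInf_le hbdd hmem) (not_le.mpr hx)
          have hblt : b x < u := not_le.mp hxnotA
          exact unif_full (hm_nonneg x) (by rw [ham]; exact hblt)
        rw [lintegral_congr_ae hcongr, lintegral_one, Measure.restrict_apply_univ]
      -- on Ioi xs the integrand is 0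
      have hpart3 : ∫⁻ x, g x ∂(μ.restrict (Set.Ioi xs)) = 0 := by
        have hcongr : ∀ᵐ x ∂(μ.restrict (Set.Ioi xs)), g x = 0 := by
          refine (ae_restrict_iff' measurableSet_Ioi).mpr (ae_of_all _ fun x hx => ?_)
          have h1 : Set.Iic xs ⊆ Set.Iio x := fun y hy => show y < x from lt_of_le_of_lt hy hx
          have h2 : ENNReal.ofReal u ≤ μ (Set.Iio x) := hxsA.trans (measure_mono h1)
          have h3 : u ≤ a x := by
            have := ENNReal.toReal_mono (hfin _) h2
            rwa [ENNReal.toReal_ofReal hu0.le] at this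
          exact unif_empty (hm_nonneg x) h3
        rw [lintegral_congr_ae hcongr, lintegral_zero]
      -- the singleton
      have hpart2 : ∫⁻ x, g x ∂(μ.restrict {xs}) = ENNReal.ofReal (u - a xs) := by
        rw [lintegral_singleton]
        rcases eq_or_lt_of_le (zero_le : 0 ≤ μ {xs}) with hzero | hpos
        · -- μ {xs} = 0
          have hmzero : μ {xs} = 0 := hzero.symm
          have hmxs : m xs = 0 := by
            simp only [hm]
            rw [hmzero]
            simp
          have hbeq : b xs = a xs := by rw [← ham xs, hmxs, add_zero]
          have huax : u = a xs := le_antisymm (hbeq ▸ hu_le_bxs) ha_le_u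
          rw [hmzero, mul_zero, ← huax]
          simp
        · -- μ {xs} > 0
          have hmpos : 0 < m xs := ENNReal.toReal_pos (ne_of_gt hpos) (hfin _)
          have hgxs : g xs = ENNReal.ofReal ((u - a xs) / m xs) :=
            unif_Ico hmpos ha_le_u (by rw [ham]; exact hu_le_bxs)
          have hmu : μ {xs} = ENNReal.ofReal (m xs) := (ENNReal.ofReal_toReal (hfin _)).symm
          rw [hgxs, hmu, ← ENNReal.ofReal_mul (div_nonneg (by linarith) hmpos.le),
            div_mul_cancel₀ _ (ne_of_gt hmpos)]
      rw [hpart1, hpart2, hpart3, add_zero]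
      -- conclude
      have hIio_eq : μ (Set.Iio xs) = ENNReal.ofReal (a xs) := (ENNReal.ofReal_toReal (hfin _)).symm
      rw [hIio_eq, ← ENNReal.ofReal_add (ha_nonneg xs) (by linarith)]
      have hu_le_one : u ≤ 1 := hu_le_bxs.trans (hb_le_one xs)
      rw [uniform01_Iio_of_le hu_le_one]
      congr 1
      ring
    · -- A empty: every x has b x < u, so the integrand is 1 and u ≥ 1
      have hblt : ∀ x, b x < u := by
        intro x
        by_contra h
        exact hAne ⟨x, not_lt.mp h⟩
      have h1 : ∀ x : ℝ, uniform01 {lam | a x + lam * m x < u} = 1 := fun x =>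
        unif_full (hm_nonneg x) (by rw [ham]; exact hblt x)
      rw [lintegral_congr h1, lintegral_one, measure_univ]
      -- show 1 ≤ u
      have huniv : Set.univ = ⋃ n : ℕ, Set.Iic ((n:ℝ)) := by
        ext x
        simp only [Set.mem_univ, Set.mem_iUnion, Set.mem_Iic, true_iff]
        obtain ⟨n, hn⟩ := exists_nat_gt x
        exact ⟨n, hn.le⟩
      have hmono : Monotone (fun n : ℕ => Set.Iic ((n:ℝ))) := fun i j hij =>
        Set.Iic_subset_Iic.mpr (Nat.cast_le.mpr hij)
      have hle : (1:ℝ≥0∞) ≤ ENNReal.ofReal u := by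
        calc (1:ℝ≥0∞) = μ Set.univ := (measure_univ).symm
          _ = ⨆ n : ℕ, μ (Set.Iic ((n:ℝ))) := by rw [huniv, hmono.measure_iUnion]
          _ ≤ ENNReal.ofReal u := iSup_le fun n =>
              (ENNReal.le_ofReal_iff_toReal_le (hfin _) hu0.le).mpr (hblt _).le
      have : 1 ≤ u := by
        rwa [ENNReal.one_le_ofReal] at hle
      rw [uniform01_Iio_of_ge this]
end

section
/- Let n ≥ 2 and let μ be any probability measure on [0,1] × [0,1] whose two marginals are both the uniform distribution on [0,1]. Then ∫ x·(1−z)^{n−1} dμ(x,z) ≥ 1/(n + n²), with equality when μ is the law of (X, X) for X uniform on [0,1]. -/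
open MeasureTheory ProbabilityTheory

private lemma qpq_tangent (n : ℕ) (hn : 2 ≤ n) {a b : ℝ} (ha : 0 ≤ a) (hb : 0 ≤ b) :
    b ^ n + n * b ^ (n - 1) * (a - b) ≤ a ^ n := by
  obtain ⟨k, rfl⟩ : ∃ k, n = k + 1 := ⟨n - 1, by omega⟩
  rcases eq_or_lt_of_le hb with h0 | h0
  · have hk : (0:ℝ) ^ k = 0 := zero_pow (by omega)
    simp [← h0, hk]
    positivity
  · have hx : (-2:ℝ) ≤ a / b - 1 := by
      have : 0 ≤ a / b := div_nonneg ha hb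
      linarith
    have h := one_add_mul_le_pow hx (k + 1)
    have hab : 1 + (a / b - 1) = a / b := by ring
    rw [hab] at h
    have h2 : b ^ (k+1) * (1 + (k+1 : ℕ) * (a / b - 1)) ≤ b ^ (k+1) * (a / b) ^ (k+1) :=
      mul_le_mul_of_nonneg_left h (by positivity)
    have h3 : b ^ (k+1) * (a / b) ^ (k+1) = a ^ (k+1) := by
      rw [div_pow]; field_simp
    have h4 : b ^ (k+1) * (1 + (k+1 : ℕ) * (a / b - 1))
        = b ^ (k+1) + (k+1 : ℕ) * b ^ k * (a - b) := by
      have hbne : b ≠ 0 := ne_of_gt h0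
      field_simp
      ring
    rw [h3, h4] at h2
    simpa using h2

private lemma qpq_int_pow (k : ℕ) : ∫ x in (0:ℝ)..1, (1 - x) ^ k = 1 / (k + 1) := by
  rw [show (fun x : ℝ => (1 - x) ^ k) = (fun x => (fun y => y ^ k) (1 - x)) from rfl]
  rw [intervalIntegral.integral_comp_sub_left (fun y : ℝ => y ^ k) 1]
  simp [integral_pow]

private lemma qpq_int_id_mul (k : ℕ) :
    ∫ x in (0:ℝ)..1, x * (1 - x) ^ k = 1 / (k + 1) - 1 / (k + 2) := by
  have h : ∀ x : ℝ, x * (1 - x) ^ k = (1 - x) ^ k - (1 - x) ^ (k + 1) := by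
    intro x; ring
  simp_rw [h]
  have c1 : IntervalIntegrable (fun x : ℝ => (1 - x) ^ k) volume 0 1 :=
    Continuous.intervalIntegrable (by fun_prop) _ _
  have c2 : IntervalIntegrable (fun x : ℝ => (1 - x) ^ (k + 1)) volume 0 1 :=
    Continuous.intervalIntegrable (by fun_prop) _ _
  rw [intervalIntegral.integral_sub c1 c2, qpq_int_pow, qpq_int_pow]
  push_cast; ring

private lemma qpq_unif_int (f : ℝ → ℝ) : ∫ x, f x ∂uniform01 = ∫ x in (0:ℝ)..1, f x := by
  rw [uniform01, integral_Icc_eq_integral_Ioc, ← intervalIntegral.integral_of_le zero_le_one]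

/-- **Strategy-proofness of QPQ.**
Let `n ≥ 2` and let `μ` be any probability measure on `[0,1] × [0,1]` whose two marginals are
both uniform on `[0,1]`. Then `∫ x·(1−z)^{n−1} dμ(x,z) ≥ 1/(n + n²)`, with equality when `μ` is
the law of `(X, X)` for `X` uniform on `[0,1]`. -/
theorem honesty_minimizes_work (n : ℕ) (hn : 2 ≤ n)
    (μ : Measure (ℝ × ℝ)) [IsProbabilityMeasure μ]
    (hfst : μ.map Prod.fst = uniform01) (hsnd : μ.map Prod.snd = uniform01) :
    1 / ((n : ℝ) + (n : ℝ) ^ 2) ≤ ∫ p, p.1 * (1 - p.2) ^ (n - 1) ∂μ ∧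
      (μ = uniform01.map (fun x => (x, x)) →
        ∫ p, p.1 * (1 - p.2) ^ (n - 1) ∂μ = 1 / ((n : ℝ) + (n : ℝ) ^ 2)) := by
  have hn0 : (0:ℝ) < n := by positivity
  have hnR : (1:ℝ) ≤ n := by exact_mod_cast hn.trans' (by norm_num)
  set k := n - 1 with hk
  have hkn : n = k + 1 := by omega
  -- the dual potentials
  set φ : ℝ → ℝ := fun x => 1 / n - (1 - x) ^ n / n with hφ
  set ψ : ℝ → ℝ := fun z => -(1 / n) + z * (1 - z) ^ k + (1 - z) ^ n / n with hψ
  have hφc : Continuous φ := by rw [hφ]; fun_prop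
  have hψc : Continuous ψ := by rw [hψ]; fun_prop
  have hfc : Continuous (fun p : ℝ × ℝ => p.1 * (1 - p.2) ^ k) := by fun_prop
  -- a.e. membership in [0,1]
  have hmem : ∀ (g : ℝ × ℝ → ℝ), Measurable g → μ.map g = uniform01 →
      ∀ᵐ p ∂μ, g p ∈ Set.Icc (0:ℝ) 1 := by
    intro g hg hmap
    have h0 : uniform01 (Set.Icc (0:ℝ) 1)ᶜ = 0 := by
      rw [uniform01, Measure.restrict_apply measurableSet_Icc.compl]; simp
    have h1 : μ (g ⁻¹' (Set.Icc (0:ℝ) 1)ᶜ) = 0 := by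
      rw [← Measure.map_apply hg measurableSet_Icc.compl, hmap, h0]
    exact h1
  have hA : ∀ᵐ p ∂μ, p.1 ∈ Set.Icc (0:ℝ) 1 := hmem _ measurable_fst hfst
  have hB : ∀ᵐ p ∂μ, p.2 ∈ Set.Icc (0:ℝ) 1 := hmem _ measurable_snd hsnd
  -- the pointwise (dual) inequality
  have hkey : ∀ x z : ℝ, x ∈ Set.Icc (0:ℝ) 1 → z ∈ Set.Icc (0:ℝ) 1 →
      φ x + ψ z ≤ x * (1 - z) ^ k := by
    intro x z hx hz
    have ha : 0 ≤ 1 - x := by linarith [hx.2]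
    have hb : 0 ≤ 1 - z := by linarith [hz.2]
    have ht := qpq_tangent n hn ha hb
    rw [← hk] at ht
    have h6 : ((1-z)^n - (1-x)^n)/n ≤ (x - z) * (1-z)^k := by
      rw [div_le_iff₀ hn0]; nlinarith [ht]
    have h7 : φ x + ψ z = z * (1-z)^k + ((1-z)^n - (1-x)^n)/n := by
      rw [hφ, hψ]; ring
    rw [h7]
    nlinarith [h6]
  -- integrability
  have hf_int : Integrable (fun p : ℝ × ℝ => p.1 * (1 - p.2) ^ k) μ := by
    apply (integrable_const (1:ℝ)).mono' hfc.aestronglyMeasurable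
    filter_upwards [hA, hB] with p hp1 hp2
    have h1 : |p.1| ≤ 1 := abs_le.mpr ⟨by linarith [hp1.1], hp1.2⟩
    have h2 : |1 - p.2| ≤ 1 := abs_le.mpr ⟨by linarith [hp2.2], by linarith [hp2.1]⟩
    rw [Real.norm_eq_abs, abs_mul, abs_pow]
    exact mul_le_one₀ h1 (by positivity) (pow_le_one₀ (abs_nonneg _) h2)
  have hφ_int : Integrable (fun p : ℝ × ℝ => φ p.1) μ := by
    apply (integrable_const (2:ℝ)).mono' (hφc.comp continuous_fst).aestronglyMeasurable
    filter_upwards [hA] with p hp1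
    have h2 : |1 - p.1| ≤ 1 := abs_le.mpr ⟨by linarith [hp1.2], by linarith [hp1.1]⟩
    have h3 : |(1 - p.1) ^ n| ≤ 1 := by rw [abs_pow]; exact pow_le_one₀ (abs_nonneg _) h2
    rw [Real.norm_eq_abs, hφ]
    have h4 : |1/(n:ℝ)| ≤ 1 := by rw [abs_of_pos (by positivity)]; rw [div_le_one hn0]; linarith
    calc |1 / (n:ℝ) - (1 - p.1) ^ n / n| ≤ |1/(n:ℝ)| + |(1 - p.1) ^ n / n| := abs_sub _ _
    _ ≤ 1 + 1 := by
        refine add_le_add h4 ?_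
        rw [abs_div, abs_of_pos hn0, div_le_one hn0]
        exact h3.trans hnR
    _ = 2 := by norm_num
  have hψ_int : Integrable (fun p : ℝ × ℝ => ψ p.2) μ := by
    apply (integrable_const (3:ℝ)).mono' (hψc.comp continuous_snd).aestronglyMeasurable
    filter_upwards [hB] with p hp2
    have h2 : |1 - p.2| ≤ 1 := abs_le.mpr ⟨by linarith [hp2.2], by linarith [hp2.1]⟩
    have hz : |p.2| ≤ 1 := abs_le.mpr ⟨by linarith [hp2.1], hp2.2⟩
    have h3 : ∀ m : ℕ, |(1 - p.2) ^ m| ≤ 1 := fun m => by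
      rw [abs_pow]; exact pow_le_one₀ (abs_nonneg _) h2
    have h4 : |1/(n:ℝ)| ≤ 1 := by rw [abs_of_pos (by positivity)]; rw [div_le_one hn0]; linarith
    rw [Real.norm_eq_abs, hψ]
    calc |-(1 / (n:ℝ)) + p.2 * (1 - p.2) ^ k + (1 - p.2) ^ n / n|
        ≤ |-(1 / (n:ℝ)) + p.2 * (1 - p.2) ^ k| + |(1 - p.2) ^ n / n| := abs_add_le _ _
    _ ≤ (|(-(1 / (n:ℝ)))| + |p.2 * (1 - p.2) ^ k|) + |(1 - p.2) ^ n / n| :=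
        add_le_add_left (abs_add_le _ _) _
    _ ≤ (1 + 1) + 1 := by
        refine add_le_add (add_le_add (by rwa [abs_neg]) ?_) ?_
        · rw [abs_mul]; exact mul_le_one₀ hz (abs_nonneg _) (h3 k)
        · rw [abs_div, abs_of_pos hn0, div_le_one hn0]; exact (h3 n).trans hnR
    _ = 3 := by norm_num
  -- marginal integrals
  have hmargφ : ∫ p, φ p.1 ∂μ = ∫ x, φ x ∂uniform01 := by
    rw [← hfst, integral_map measurable_fst.aemeasurable hφc.aestronglyMeasurable]
  have hmargψ : ∫ p, ψ p.2 ∂μ = ∫ z, ψ z ∂uniform01 := by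
    rw [← hsnd, integral_map measurable_snd.aemeasurable hψc.aestronglyMeasurable]
  have hφval : ∫ x, φ x ∂uniform01 = 1 / n - (1 / (n + 1)) / n := by
    rw [qpq_unif_int]
    simp only [hφ]
    have c2 : IntervalIntegrable (fun x : ℝ => (1 - x) ^ n / (n:ℝ)) volume 0 1 :=
      Continuous.intervalIntegrable (by fun_prop) _ _
    have c2v : ∫ x in (0:ℝ)..1, (1 - x) ^ n / (n:ℝ) = (1 / ((n:ℝ) + 1)) / n := by
      rw [intervalIntegral.integral_div, qpq_int_pow]
    rw [intervalIntegral.integral_sub intervalIntegrable_const c2, c2v]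
    simp
  have hψval : ∫ z, ψ z ∂uniform01
      = -(1 / n) + (1 / (k + 1) - 1 / (k + 2)) + (1 / (n + 1)) / n := by
    rw [qpq_unif_int]
    simp only [hψ]
    have c1 : IntervalIntegrable (fun z : ℝ => -(1/(n:ℝ)) + z * (1 - z) ^ k) volume 0 1 :=
      Continuous.intervalIntegrable (by fun_prop) _ _
    have c2 : IntervalIntegrable (fun z : ℝ => (1 - z) ^ n / (n:ℝ)) volume 0 1 :=
      Continuous.intervalIntegrable (by fun_prop) _ _
    have c3 : IntervalIntegrable (fun z : ℝ => z * (1 - z) ^ k) volume 0 1 :=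
      Continuous.intervalIntegrable (by fun_prop) _ _
    have c2v : ∫ z in (0:ℝ)..1, (1 - z) ^ n / (n:ℝ) = (1 / ((n:ℝ) + 1)) / n := by
      rw [intervalIntegral.integral_div, qpq_int_pow]
    rw [intervalIntegral.integral_add c1 c2,
      intervalIntegral.integral_add intervalIntegrable_const c3,
      c2v, qpq_int_id_mul]
    simp
  have hcast : ((k:ℝ) + 1) = n ∧ ((k:ℝ) + 2) = n + 1 := by
    constructor <;> · rw [hkn]; push_cast; ring
  have hval : ∫ x, φ x ∂uniform01 + ∫ z, ψ z ∂uniform01 = 1 / ((n:ℝ) + (n:ℝ) ^ 2) := by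
    rw [hφval, hψval, hcast.1, hcast.2]
    field_simp
    ring
  constructor
  · have hle : ∫ p, (φ p.1 + ψ p.2) ∂μ ≤ ∫ p, p.1 * (1 - p.2) ^ k ∂μ := by
      apply integral_mono_ae (hφ_int.add hψ_int) hf_int
      filter_upwards [hA, hB] with p hp1 hp2
      exact hkey _ _ hp1 hp2
    rw [integral_add hφ_int hψ_int, hmargφ, hmargψ, hval] at hle
    exact hle
  · intro hμ
    have hm : AEMeasurable (fun x : ℝ => (x, x)) uniform01 :=
      (measurable_id.prodMk measurable_id).aemeasurable
    rw [hμ, integral_map hm hfc.aestronglyMeasurable]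
    simp only
    rw [qpq_unif_int, qpq_int_id_mul, hcast.1, hcast.2]
    field_simp
    ring
end

section
/- Let n ≥ 2 and let X, Z, Y₁, …, Y_{n-1} be independent random variables, each uniformly distributed on [0,1], with Y = min(Y₁, …, Y_{n-1}). Then E[X · 1{X > Y}] > E[X · 1{Z > Y}]; that is, 1/2 − 1/(n + n²) > 1/2 − 1/(2n). -/
open MeasureTheory ProbabilityTheory

instance inst_s14 : IsProbabilityMeasure uniform01 := by
  constructor
  simp [uniform01, Real.volume_Icc]

lemma uniform01_Ici {x : ℝ} (h0 : 0 ≤ x) :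
    uniform01 (Set.Ici x) = ENNReal.ofReal (1 - x) := by
  rw [uniform01, Measure.restrict_apply measurableSet_Ici]
  have h : Set.Ici x ∩ Set.Icc 0 1 = Set.Icc x 1 := by
    ext t
    simp only [Set.mem_inter_iff, Set.mem_Ici, Set.mem_Icc]
    exact ⟨fun ⟨hx, _, h1⟩ => ⟨hx, h1⟩, fun ⟨hx, h1⟩ => ⟨hx, le_trans h0 hx, h1⟩⟩
  rw [h, Real.volume_Icc]

lemma integral_if_lt {Ω : Type*} [MeasurableSpace Ω] (P : Measure Ω) [IsProbabilityMeasure P]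
    (U V : Ω → ℝ) (hU : Measurable U) (hV : Measurable V)
    (hUunif : P.map U = uniform01) (hind : IndepFun U V P)
    (c : ℝ → ℝ) (hc : Measurable c) (hcb : ∀ x ∈ Set.Icc (0:ℝ) 1, |c x| ≤ 1) :
    ∫ ω, (if V ω < U ω then c (U ω) else 0) ∂P
      = ∫ x in Set.Icc (0:ℝ) 1, c x * ((P.map V) (Set.Iio x)).toReal := by
  set ν := P.map V with hν
  have hνprob : IsProbabilityMeasure ν := Measure.isProbabilityMeasure_map hV.aemeasurable
  have hmap : P.map (fun ω => (U ω, V ω)) = uniform01.prod ν := by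
    rw [← hUunif]
    exact (indepFun_iff_map_prod_eq_prod_map_map hU.aemeasurable hV.aemeasurable).1 hind
  set f : ℝ × ℝ → ℝ := fun p => if p.2 < p.1 then c p.1 else 0 with hf
  have hfm : Measurable f := Measurable.ite (measurableSet_lt measurable_snd measurable_fst)
    (hc.comp measurable_fst) measurable_const
  have h1 : ∫ ω, (if V ω < U ω then c (U ω) else 0) ∂P = ∫ p, f p ∂(uniform01.prod ν) := by
    rw [← hmap, integral_map (hU.prodMk hV).aemeasurable hfm.aestronglyMeasurable]
  rw [h1]
  have hae : ∀ᵐ p ∂(uniform01.prod ν), p.1 ∈ Set.Icc (0:ℝ) 1 := by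
    rw [ae_iff]
    refine measure_mono_null (fun p hp => ?_) (?_ : (uniform01.prod ν) ((Set.Icc (0:ℝ) 1)ᶜ ×ˢ Set.univ) = 0)
    · exact ⟨hp, Set.mem_univ _⟩
    · rw [Measure.prod_prod]
      have : uniform01 ((Set.Icc (0:ℝ) 1)ᶜ) = 0 := by
        rw [uniform01, Measure.restrict_apply measurableSet_Icc.compl, Set.compl_inter_self]
        simp
      simp [this]
  have hint : Integrable f (uniform01.prod ν) := by
    refine Integrable.mono' (integrable_const 1) hfm.aestronglyMeasurable ?_
    refine hae.mono fun p hp => ?_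
    simp only [hf, Real.norm_eq_abs]
    split
    · exact hcb _ hp
    · simp
  rw [integral_prod f hint]
  have h2 : ∀ x : ℝ, ∫ v, f (x, v) ∂ν = c x * (ν (Set.Iio x)).toReal := by
    intro x
    have : (fun v => f (x, v)) = (Set.Iio x).indicator (fun _ => c x) := by
      funext v
      simp [hf, Set.indicator_apply]
    rw [this, integral_indicator measurableSet_Iio, setIntegral_const, smul_eq_mul, mul_comm]
    rfl
  simp only [h2]
  rfl

/-- **Honesty yields strictly higher expected utility (QPQ is strategy-proof).**
Let `n ≥ 2` and let `X, Z, Y₁, …, Y_{n-1}` be independent random variables, each uniform on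
`[0,1]`, with `Y = min(Y₁, …, Y_{n-1})`. Then `E[X · 1{X > Y}] > E[X · 1{Z > Y}]`; that is,
`1/2 − 1/(n + n²) > 1/2 − 1/(2n)`. -/
theorem honesty_higher_utility {Ω : Type*} [MeasurableSpace Ω] (P : Measure Ω)
    [IsProbabilityMeasure P]
    (n : ℕ) (hn : 2 ≤ n)
    (X Z : Ω → ℝ) (Y : Fin (n - 1) → Ω → ℝ)
    (hX : Measurable X) (hZ : Measurable Z) (hY : ∀ i, Measurable (Y i))
    (hindep : iIndepFun
      (fun s : Bool ⊕ Fin (n - 1) => Sum.elim (fun b : Bool => cond b X Z) Y s) P)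
    (hXunif : P.map X = uniform01) (hZunif : P.map Z = uniform01)
    (hYunif : ∀ i, P.map (Y i) = uniform01) :
    (∫ ω, (if X ω > ⨅ i, Y i ω then X ω else 0) ∂P)
        > ∫ ω, (if Z ω > ⨅ i, Y i ω then X ω else 0) ∂P ∧
      (1 / 2 - 1 / ((n : ℝ) + (n : ℝ) ^ 2)) > 1 / 2 - 1 / (2 * (n : ℝ)) := by
  have hm1 : 1 ≤ n - 1 := by omega
  have hne : Nonempty (Fin (n - 1)) := ⟨⟨0, hm1⟩⟩
  have hfm : ∀ i : Bool ⊕ Fin (n - 1),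
      Measurable ((fun s : Bool ⊕ Fin (n - 1) => Sum.elim (fun b : Bool => cond b X Z) Y s) i) := by
    rintro (b | j)
    · cases b
      · exact hZ
      · exact hX
    · exact hY j
  have hYmM : Measurable (fun ω => ⨅ i, Y i ω) := Measurable.iInf hY
  -- distribution of Ym
  have hν : ∀ x : ℝ, 0 ≤ x →
      (P.map (fun ω => ⨅ i, Y i ω)) (Set.Ici x) = ENNReal.ofReal (1 - x) ^ (n - 1) := by
    intro x hx
    rw [Measure.map_apply hYmM measurableSet_Ici]
    have hpre : (fun ω => ⨅ i, Y i ω) ⁻¹' Set.Ici x = ⋂ j, Y j ⁻¹' Set.Ici x := by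
      ext ω
      simp only [Set.mem_preimage, Set.mem_Ici, Set.mem_iInter]
      exact le_ciInf_iff (Set.finite_range _).bddBelow
    have hs : ∀ i : Bool ⊕ Fin (n - 1),
        MeasurableSet[MeasurableSpace.comap
          ((fun s : Bool ⊕ Fin (n - 1) => Sum.elim (fun b : Bool => cond b X Z) Y s) i)
          inferInstance]
        (Sum.elim (fun _ : Bool => Set.univ) (fun j => Y j ⁻¹' Set.Ici x) i) := by
      rintro (b | j)
      · exact MeasurableSet.univ
      · exact ⟨Set.Ici x, measurableSet_Ici, rfl⟩
    have hinter := hindep.meas_iInter hs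
    have hiInter : (⋂ i, Sum.elim (fun _ : Bool => Set.univ) (fun j => Y j ⁻¹' Set.Ici x) i)
        = ⋂ j, Y j ⁻¹' Set.Ici x := by
      ext ω
      simp [Sum.forall]
    rw [hpre, ← hiInter, hinter, Fintype.prod_sum_type]
    have hterm : ∀ j : Fin (n - 1),
        P (Sum.elim (fun _ : Bool => Set.univ) (fun j => Y j ⁻¹' Set.Ici x) (Sum.inr j))
          = ENNReal.ofReal (1 - x) := by
      intro j
      show P (Y j ⁻¹' Set.Ici x) = _
      rw [← Measure.map_apply (hY j) measurableSet_Ici, hYunif j, uniform01_Ici hx]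
    simp only [hterm, Sum.elim_inl, measure_univ, Finset.prod_const_one, one_mul,
      Finset.prod_const, Finset.card_univ, Fintype.card_fin]
  have hprob : IsProbabilityMeasure (P.map (fun ω => ⨅ i, Y i ω)) :=
    Measure.isProbabilityMeasure_map hYmM.aemeasurable
  have hνIio : ∀ x ∈ Set.Icc (0:ℝ) 1,
      ((P.map (fun ω => ⨅ i, Y i ω)) (Set.Iio x)).toReal = 1 - (1 - x) ^ (n - 1) := by
    intro x hx
    have h1 : Set.Iio x = (Set.Ici x)ᶜ := Set.compl_Ici.symm
    rw [h1, prob_compl_eq_one_sub measurableSet_Ici, hν x hx.1,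
      ENNReal.toReal_sub_of_le (pow_le_one' (ENNReal.ofReal_le_one.2 (by linarith [hx.1, hx.2])) _)
        ENNReal.one_ne_top,
      ENNReal.toReal_one, ENNReal.toReal_pow, ENNReal.toReal_ofReal (by linarith [hx.2])]
  -- independence facts
  have hdisj1 : Disjoint ({Sum.inl true} : Finset (Bool ⊕ Fin (n - 1)))
      (Finset.univ.image Sum.inr) := by
    simp [Finset.disjoint_left]
  have h1 := hindep.indepFun_finset {Sum.inl true} (Finset.univ.image Sum.inr) hdisj1 hfm
  have hXY : IndepFun X (fun ω => ⨅ i, Y i ω) P := by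
    have hφ : Measurable fun v : ({Sum.inl true} : Finset (Bool ⊕ Fin (n - 1))) → ℝ =>
        v ⟨Sum.inl true, Finset.mem_singleton_self _⟩ := measurable_pi_apply _
    have hψ : Measurable fun v :
        ((Finset.univ.image Sum.inr : Finset (Bool ⊕ Fin (n - 1))) : Finset (Bool ⊕ Fin (n - 1))) → ℝ =>
        ⨅ j : Fin (n - 1), v ⟨Sum.inr j, Finset.mem_image_of_mem _ (Finset.mem_univ j)⟩ :=
      Measurable.iInf fun j => measurable_pi_apply _
    exact h1.comp hφ hψ
  have hdisj2 : Disjoint ({Sum.inl false} : Finset (Bool ⊕ Fin (n - 1)))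
      (Finset.univ.image Sum.inr) := by
    simp [Finset.disjoint_left]
  have h2 := hindep.indepFun_finset {Sum.inl false} (Finset.univ.image Sum.inr) hdisj2 hfm
  have hZY : IndepFun Z (fun ω => ⨅ i, Y i ω) P := by
    have hφ : Measurable fun v : ({Sum.inl false} : Finset (Bool ⊕ Fin (n - 1))) → ℝ =>
        v ⟨Sum.inl false, Finset.mem_singleton_self _⟩ := measurable_pi_apply _
    have hψ : Measurable fun v :
        ((Finset.univ.image Sum.inr : Finset (Bool ⊕ Fin (n - 1))) : Finset (Bool ⊕ Fin (n - 1))) → ℝ =>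
        ⨅ j : Fin (n - 1), v ⟨Sum.inr j, Finset.mem_image_of_mem _ (Finset.mem_univ j)⟩ :=
      Measurable.iInf fun j => measurable_pi_apply _
    exact h2.comp hφ hψ
  have hdisj3 : Disjoint ({Sum.inl true} : Finset (Bool ⊕ Fin (n - 1)))
      (insert (Sum.inl false) (Finset.univ.image Sum.inr)) := by
    simp [Finset.disjoint_left]
  have h3 := hindep.indepFun_finset {Sum.inl true}
    (insert (Sum.inl false) (Finset.univ.image Sum.inr)) hdisj3 hfm
  have hXZY : IndepFun X (fun ω => (Z ω, ⨅ i, Y i ω)) P := by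
    have hφ : Measurable fun v : ({Sum.inl true} : Finset (Bool ⊕ Fin (n - 1))) → ℝ =>
        v ⟨Sum.inl true, Finset.mem_singleton_self _⟩ := measurable_pi_apply _
    have hψ : Measurable fun v :
        ((insert (Sum.inl false) (Finset.univ.image Sum.inr) : Finset (Bool ⊕ Fin (n - 1)))) → ℝ =>
        (v ⟨Sum.inl false, Finset.mem_insert_self _ _⟩,
         ⨅ j : Fin (n - 1), v ⟨Sum.inr j,
           Finset.mem_insert_of_mem (Finset.mem_image_of_mem _ (Finset.mem_univ j))⟩) :=
      (measurable_pi_apply _).prodMk (Measurable.iInf fun j => measurable_pi_apply _)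
    exact h3.comp hφ hψ
  -- integrability of X and the indicator, and E[X]
  have hXae : ∀ᵐ ω ∂P, X ω ∈ Set.Icc (0:ℝ) 1 := by
    rw [ae_iff]
    have : P (X ⁻¹' (Set.Icc (0:ℝ) 1)ᶜ) = 0 := by
      rw [← Measure.map_apply hX measurableSet_Icc.compl, hXunif, uniform01,
        Measure.restrict_apply measurableSet_Icc.compl, Set.compl_inter_self]
      simp
    exact this
  have hXint : Integrable X P := by
    refine Integrable.mono' (integrable_const 1) hX.aestronglyMeasurable ?_
    refine hXae.mono fun ω h => ?_
    rw [Real.norm_eq_abs, abs_le]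
    exact ⟨by linarith [h.1], h.2⟩
  have hWm : Measurable (fun ω => if (⨅ i, Y i ω) < Z ω then (1:ℝ) else 0) :=
    Measurable.ite (measurableSet_lt hYmM hZ) measurable_const measurable_const
  have hWint : Integrable (fun ω => if (⨅ i, Y i ω) < Z ω then (1:ℝ) else 0) P := by
    refine Integrable.mono' (integrable_const 1) hWm.aestronglyMeasurable
      (Filter.Eventually.of_forall fun ω => ?_)
    split <;> simp
  have hXW : IndepFun X (fun ω => if (⨅ i, Y i ω) < Z ω then (1:ℝ) else 0) P := by
    have hφ : Measurable fun p : ℝ × ℝ => if p.2 < p.1 then (1:ℝ) else 0 :=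
      Measurable.ite (measurableSet_lt measurable_snd measurable_fst) measurable_const
        measurable_const
    exact hXZY.comp measurable_id hφ
  have hEX : ∫ ω, X ω ∂P = 1/2 := by
    have h1 : ∫ ω, X ω ∂P = ∫ x, x ∂(P.map X) :=
      (integral_map hX.aemeasurable measurable_id.aestronglyMeasurable).symm
    rw [h1, hXunif]
    show ∫ x in Set.Icc (0:ℝ) 1, x = 1/2
    rw [MeasureTheory.integral_Icc_eq_integral_Ioc,
      ← intervalIntegral.integral_of_le zero_le_one, integral_id]
    norm_num
  -- evaluate the two integrals
  have e1 : ∫ ω, (if (⨅ i, Y i ω) < X ω then X ω else 0) ∂P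
      = ∫ x in Set.Icc (0:ℝ) 1, x * ((P.map (fun ω => ⨅ i, Y i ω)) (Set.Iio x)).toReal := by
    have h := integral_if_lt P X (fun ω => ⨅ i, Y i ω) hX hYmM hXunif hXY id measurable_id
      (fun x hx => by rw [id_eq, abs_le]; exact ⟨by linarith [hx.1], hx.2⟩)
    simpa using h
  have e2 : ∫ ω, (if (⨅ i, Y i ω) < Z ω then (1:ℝ) else 0) ∂P
      = ∫ x in Set.Icc (0:ℝ) 1, ((P.map (fun ω => ⨅ i, Y i ω)) (Set.Iio x)).toReal := by
    have h := integral_if_lt P Z (fun ω => ⨅ i, Y i ω) hZ hYmM hZunif hZY (fun _ => 1)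
      measurable_const (fun x _ => by norm_num)
    simpa using h
  have e1' : ∫ x in Set.Icc (0:ℝ) 1, x * ((P.map (fun ω => ⨅ i, Y i ω)) (Set.Iio x)).toReal
      = ∫ x in Set.Icc (0:ℝ) 1, x * (1 - (1-x)^(n-1)) := by
    refine setIntegral_congr_fun measurableSet_Icc fun x hx => ?_
    rw [hνIio x hx]
  have e2' : ∫ x in Set.Icc (0:ℝ) 1, ((P.map (fun ω => ⨅ i, Y i ω)) (Set.Iio x)).toReal
      = ∫ x in Set.Icc (0:ℝ) 1, (1 - (1-x)^(n-1)) := by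
    refine setIntegral_congr_fun measurableSet_Icc fun x hx => ?_
    rw [hνIio x hx]
  -- the real integrals
  have hpow : ∫ x in (0:ℝ)..1, (1-x)^(n-1) = 1/(((n - 1 : ℕ) : ℝ) + 1) := by
    have h := intervalIntegral.integral_comp_sub_left (a := (0:ℝ)) (b := 1)
      (fun t : ℝ => t^(n-1)) 1
    simp only [sub_zero, sub_self] at h
    rw [h, integral_pow]
    norm_num
  have hxpow : ∫ x in (0:ℝ)..1, x * (1-x)^(n-1)
      = 1/(((n - 1 : ℕ) : ℝ) + 1) - 1/(((n - 1 : ℕ) : ℝ) + 2) := by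
    have h := intervalIntegral.integral_comp_sub_left (a := (0:ℝ)) (b := 1)
      (fun t : ℝ => (1 - t) * t^(n-1)) 1
    simp only [sub_sub_cancel, sub_zero, sub_self] at h
    rw [h]
    have step2 : ∫ t in (0:ℝ)..1, (1 - t) * t^(n-1)
        = (∫ t in (0:ℝ)..1, t^(n-1)) - ∫ t in (0:ℝ)..1, t^(n-1+1) :=
      (intervalIntegral.integral_congr fun t _ => by ring).trans
        (intervalIntegral.integral_sub ((continuous_pow _).intervalIntegrable _ _)
          ((continuous_pow _).intervalIntegrable _ _))
    rw [step2, integral_pow, integral_pow]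
    push_cast
    norm_num
    ring
  have key1 : ∫ x in Set.Icc (0:ℝ) 1, x * (1 - (1-x)^(n-1))
      = 1/2 - (1/(((n - 1 : ℕ) : ℝ) + 1) - 1/(((n - 1 : ℕ) : ℝ) + 2)) := by
    rw [MeasureTheory.integral_Icc_eq_integral_Ioc,
      ← intervalIntegral.integral_of_le zero_le_one]
    have hsplit : ∫ x in (0:ℝ)..1, x * (1 - (1-x)^(n-1))
        = (∫ x in (0:ℝ)..1, x) - ∫ x in (0:ℝ)..1, x * (1-x)^(n-1) :=
      (intervalIntegral.integral_congr fun t _ => by ring).trans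
        (intervalIntegral.integral_sub
          ((continuous_id'.intervalIntegrable _ _))
          (((continuous_id.mul ((continuous_const.sub continuous_id).pow _)).intervalIntegrable _ _)))
    rw [hsplit, integral_id, hxpow]
    norm_num
  have key2 : ∫ x in Set.Icc (0:ℝ) 1, (1 - (1-x)^(n-1))
      = 1 - 1/(((n - 1 : ℕ) : ℝ) + 1) := by
    rw [MeasureTheory.integral_Icc_eq_integral_Ioc,
      ← intervalIntegral.integral_of_le zero_le_one]
    have hsplit : ∫ x in (0:ℝ)..1, (1 - (1-x)^(n-1))
        = (∫ x in (0:ℝ)..1, (1:ℝ)) - ∫ x in (0:ℝ)..1, (1-x)^(n-1) :=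
      intervalIntegral.integral_sub intervalIntegrable_const
        (((continuous_const.sub continuous_id).pow _).intervalIntegrable _ _)
    rw [hsplit, hpow]
    simp
  have hM1 : (1:ℝ) ≤ ((n - 1 : ℕ) : ℝ) := by exact_mod_cast hm1
  constructor
  · have g1 : (∫ ω, (if X ω > ⨅ i, Y i ω then X ω else 0) ∂P)
        = 1/2 - (1/(((n - 1 : ℕ) : ℝ) + 1) - 1/(((n - 1 : ℕ) : ℝ) + 2)) := by
      simp only [gt_iff_lt]
      rw [e1, e1', key1]
    have g2 : (∫ ω, (if Z ω > ⨅ i, Y i ω then X ω else 0) ∂P)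
        = (1/2) * (1 - 1/(((n - 1 : ℕ) : ℝ) + 1)) := by
      simp only [gt_iff_lt]
      have hrw : (fun ω => if (⨅ i, Y i ω) < Z ω then X ω else 0)
          = (X * fun ω => if (⨅ i, Y i ω) < Z ω then (1:ℝ) else 0) := by
        funext ω
        simp only [Pi.mul_apply, mul_ite, mul_one, mul_zero]
      show ∫ ω, (fun ω => if (⨅ i, Y i ω) < Z ω then X ω else 0) ω ∂P = _
      rw [hrw, hXW.integral_mul_eq_mul_integral hXint.aestronglyMeasurable hWint.aestronglyMeasurable, hEX, e2, e2', key2]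
    rw [g1, g2]
    have d2 : (0:ℝ) < ((n - 1 : ℕ) : ℝ) + 2 := by linarith
    have hab : (1:ℝ)/(((n - 1 : ℕ) : ℝ) + 1)/2 < 1/(((n - 1 : ℕ) : ℝ) + 2) := by
      rw [div_div, div_lt_div_iff₀ (by linarith) d2]
      nlinarith
    linarith
  · have hN : (2:ℝ) ≤ (n:ℝ) := by exact_mod_cast hn
    have h1 : (1:ℝ)/((n:ℝ) + (n:ℝ)^2) < 1/(2*(n:ℝ)) := by
      rw [div_lt_div_iff₀ (by nlinarith) (by linarith)]
      nlinarith
    linarith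
end
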